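/- Let q be a prime power with q ≡ 1 (mod 4), n = q+1, n' = n/2, and P = {−(n−2)/4, ..., −1, 0, 1, ..., (n−2)/4} ⊆ Z/nZ. Then P is invariant under μ_q: i ↦ qi, P and P + n' partition Z/nZ, and the cyclic code C_P ⊆ F_q[X]/⟨X^n−1⟩ with check polynomial f_P(X) = ∏_{i∈P}(X−θ^i) is an MDS code with parameters [q+1, (q+1)/2, (q+3)/2] over F_q. -/

import Mathlib

open Polynomial

/-- `f_P(X) = ∏_{i∈P} (X − θ^i)` for a subset `P ⊆ ℤ/nℤ`. -/
noncomputable def fPoly {E : Type*} [Field E] {n : ℕ} (θ : E) (P : Finset (ZMod n)) : E[X] :=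
  ∏ i ∈ P, (X - C (θ ^ i.val))

/-- The Hamming weight of an element of `F[X]/⟨X^n − 1⟩`: the number of nonzero
coefficients of its unique representative of degree `< n`. -/
noncomputable def hammingWt {F : Type*} [Field F] {n : ℕ} (hn : n ≠ 0)
    (x : AdjoinRoot (X ^ n - 1 : F[X])) : ℕ :=
  ((AdjoinRoot.modByMonicHom
    (by simpa using monic_X_pow_sub_C (1 : F) hn : (X ^ n - 1 : F[X]).Monic)) x).support.card

/-- The cyclic code in `F[X]/⟨X^n−1⟩` with check polynomial `h`. -/
noncomputable def cyclicCode (F : Type*) [Field F] (n : ℕ) (h : F[X]) :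
    Submodule F (AdjoinRoot (X ^ n - 1 : F[X])) :=
  LinearMap.ker (LinearMap.mulRight F (AdjoinRoot.mk (X ^ n - 1 : F[X]) h))

/-- The BCH bound: a nonzero polynomial of degree `< n` vanishing at `δ` consecutive
powers `θ^{b+1}, …, θ^{b+δ}` of a primitive `n`-th root of unity has more than `δ`
nonzero coefficients. -/
lemma bch_bound {E : Type*} [Field E] {n : ℕ} {θ : E} (hθ : IsPrimitiveRoot θ n)
    {c : E[X]} (hc : c ≠ 0) (hdeg : c.natDegree < n) (b δ : ℕ)
    (hroots : ∀ t : ℕ, b + 1 ≤ t → t ≤ b + δ → c.eval (θ ^ t) = 0) :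
    δ < c.support.card := by
  have hn0 : n ≠ 0 := by omega
  have hθ0 : θ ≠ 0 := hθ.ne_zero hn0
  by_contra h
  push_neg at h
  set w := c.support.card with hw
  have hw0 : 0 < w := Finset.card_pos.mpr (Polynomial.support_nonempty.mpr hc)
  let e : Fin w ≃ {x // x ∈ c.support} := c.support.equivFin.symm
  let s : Fin w → ℕ := fun k => (e k : ℕ)
  have hs_mem : ∀ k, s k ∈ c.support := fun k => (e k).2
  have hs_lt : ∀ k, s k < n := fun k =>
    lt_of_le_of_lt (Polynomial.le_natDegree_of_mem_supp _ (hs_mem k)) hdeg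
  let v : Fin w → E := fun k => θ ^ s k
  have hv_inj : Function.Injective v := by
    intro a b hab
    exact e.injective (Subtype.ext (hθ.pow_inj (hs_lt a) (hs_lt b) hab))
  have hdet : (Matrix.vandermonde v).det ≠ 0 := by
    rw [Matrix.det_vandermonde]
    refine Finset.prod_ne_zero_iff.mpr fun i _ => Finset.prod_ne_zero_iff.mpr fun j hj => ?_
    exact sub_ne_zero.mpr fun hvij => (Finset.mem_Ioi.mp hj).ne' (hv_inj hvij)
  let u : Fin w → E := fun k => c.coeff (s k) * θ ^ ((b + 1) * s k)
  have hmv : (Matrix.vandermonde v).transpose.mulVec u = 0 := by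
    funext j
    have hj1 : b + 1 ≤ b + 1 + (j : ℕ) := by omega
    have hj2 : b + 1 + (j : ℕ) ≤ b + δ := by have := j.2; omega
    have heval := hroots _ hj1 hj2
    rw [Polynomial.eval_eq_sum, Polynomial.sum_def] at heval
    have hre : ∑ k : Fin w, c.coeff (s k) * (θ ^ (b + 1 + (j : ℕ))) ^ (s k)
        = ∑ x ∈ c.support, c.coeff x * (θ ^ (b + 1 + (j : ℕ))) ^ x := by
      exact (Equiv.sum_comp e (fun y : {x // x ∈ c.support} =>
          c.coeff y * (θ ^ (b + 1 + (j : ℕ))) ^ (y : ℕ))).trans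
        (Finset.sum_coe_sort c.support (fun y => c.coeff y * (θ ^ (b + 1 + (j:ℕ))) ^ y))
    simp only [Pi.zero_apply, Matrix.mulVec, dotProduct, Matrix.transpose_apply,
      Matrix.vandermonde]
    calc ∑ k : Fin w, v k ^ (j : ℕ) * u k
        = ∑ k : Fin w, c.coeff (s k) * (θ ^ (b + 1 + (j : ℕ))) ^ (s k) := by
          refine Finset.sum_congr rfl fun k _ => ?_
          simp only [v, u, ← pow_mul, ← pow_add]
          ring
      _ = 0 := by rw [hre, heval]
  have hu0 : u = 0 := Matrix.eq_zero_of_mulVec_eq_zero (by rwa [Matrix.det_transpose]) hmv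
  have : c.coeff (s ⟨0, hw0⟩) = 0 := by
    have := congrFun hu0 ⟨0, hw0⟩
    simp only [u, Pi.zero_apply, mul_eq_zero] at this
    rcases this with h1 | h1
    · exact h1
    · exact absurd h1 (pow_ne_zero _ hθ0)
  exact (Polynomial.mem_support_iff.mp (hs_mem ⟨0, hw0⟩)) this

lemma mem_cyclicCode {F : Type*} [Field F] {n : ℕ} {h : F[X]} (y : F[X]) :
    AdjoinRoot.mk (X ^ n - 1 : F[X]) y ∈ cyclicCode F n h ↔ (X ^ n - 1 : F[X]) ∣ y * h := by
  rw [cyclicCode, LinearMap.mem_ker, LinearMap.mulRight_apply, ← map_mul, AdjoinRoot.mk_eq_zero]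

/-- The dimension of the cyclic code with check polynomial `h` is `deg h`. -/
lemma code_finrank {F : Type*} [Field F] {n n' : ℕ} (hn0 : n ≠ 0) (h g : F[X]) (hh : h.Monic)
    (hmul : g * h = X ^ n - 1) (hdegh : h.natDegree = n') :
    Module.finrank F (cyclicCode F n h) = n' := by
  have hXm : (X ^ n - 1 : F[X]).Monic := by simpa using monic_X_pow_sub_C (1 : F) hn0
  have hg0 : g ≠ 0 := left_ne_zero_of_mul (hmul ▸ hXm.ne_zero)
  have hh0 : h ≠ 0 := hh.ne_zero
  have hdeg : h.degree = (n' : WithBot ℕ) := hdegh ▸ degree_eq_natDegree hh0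
  let ψ : F[X] →ₗ[F] AdjoinRoot (X ^ n - 1 : F[X]) :=
    { toFun := fun p => AdjoinRoot.mk _ (g * p)
      map_add' := fun a b => by rw [mul_add, map_add]
      map_smul' := fun r a => by
        simp only [RingHom.id_apply, Polynomial.smul_eq_C_mul, ← mul_assoc, mul_comm g (C r)]
        rw [mul_assoc, map_mul, Algebra.smul_def, AdjoinRoot.algebraMap_eq]
        rfl }
  have hψ : ∀ p : F[X], ψ p = AdjoinRoot.mk _ (g * p) := fun _ => rfl
  let φ : degreeLT F n' →ₗ[F] cyclicCode F n h :=
    LinearMap.codRestrict _ (ψ.comp (Submodule.subtype _)) (by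
      rintro ⟨p, hp⟩
      simp only [LinearMap.comp_apply, Submodule.subtype_apply, hψ]
      rw [mem_cyclicCode]
      exact ⟨p, by rw [← hmul]; ring⟩)
  have hinj : Function.Injective φ := by
    rw [injective_iff_map_eq_zero]
    rintro ⟨p, hp⟩ hzero
    have h0 : AdjoinRoot.mk (X ^ n - 1 : F[X]) (g * p) = 0 := by
      have := congrArg (Subtype.val) hzero
      simpa [φ, hψ] using this
    rw [AdjoinRoot.mk_eq_zero, ← hmul] at h0
    obtain ⟨k, hk⟩ := h0
    have hp0 : h ∣ p := ⟨k, mul_left_cancel₀ hg0 (by rw [hk]; ring)⟩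
    have : p = 0 :=
      eq_zero_of_dvd_of_degree_lt hp0 (hdeg ▸ Polynomial.mem_degreeLT.mp hp)
    exact Subtype.ext this
  have hsurj : Function.Surjective φ := by
    rintro ⟨x, hx⟩
    obtain ⟨c₀, rfl⟩ := AdjoinRoot.mk_surjective x
    rw [mem_cyclicCode] at hx
    rw [← hmul] at hx
    obtain ⟨k, hk⟩ := hx
    have hc₀ : c₀ = g * k := mul_right_cancel₀ hh0 (by rw [hk]; ring)
    refine ⟨⟨k %ₘ h, Polynomial.mem_degreeLT.mpr (hdeg ▸ degree_modByMonic_lt k hh)⟩, ?_⟩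
    apply Subtype.ext
    show AdjoinRoot.mk _ (g * (k %ₘ h)) = AdjoinRoot.mk _ c₀
    rw [AdjoinRoot.mk_eq_mk, hc₀, modByMonic_eq_sub_mul_div k h, ← hmul]
    exact ⟨-(k /ₘ h), by ring⟩
  have e := LinearEquiv.ofBijective φ ⟨hinj, hsurj⟩
  rw [← e.finrank_eq, (Polynomial.degreeLTEquiv F n').finrank_eq, Module.finrank_fin_fun]

/-- for `q ≡ 1 (mod 4)`, `n = q+1`, `n' = n/2` and
`P = {−(n−2)/4, …, −1, 0, 1, …, (n−2)/4} ⊆ ℤ/nℤ`: `P` is `μ_q`-invariant, `P` and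
`P + n'` partition `ℤ/nℤ`, and the cyclic code `C_P` with check polynomial
`f_P(X) = ∏_{i∈P}(X − θ^i)` is an MDS code with parameters
`[q+1, (q+1)/2, (q+3)/2]` over `F_q`. -/
theorem stmt19 (F : Type*) [Field F] [Fintype F] (q : ℕ) (hcard : Fintype.card F = q)
    (hq4 : q ≡ 1 [MOD 4]) (n n' : ℕ) (hn : n = q + 1) (hn' : n' = n / 2) [NeZero n]
    (E : Type*) [Field E] [Algebra F E] (θ : E) (hθ : IsPrimitiveRoot θ n)
    (P : Finset (ZMod n))
    (hPdef : P = (Finset.Icc (-(((n : ℤ) - 2) / 4)) (((n : ℤ) - 2) / 4)).image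
      (fun i : ℤ => (i : ZMod n)))
    (fPF : F[X]) (hfPF : fPF.map (algebraMap F E) = fPoly θ P) :
    P.image (fun i => (q : ZMod n) * i) = P ∧
    P.image (fun i => i + (n' : ZMod n)) = Pᶜ ∧
    Module.finrank F ↥(cyclicCode F n fPF) = (q + 1) / 2 ∧
    (∀ x ∈ cyclicCode F n fPF, x ≠ 0 →
      (q + 3) / 2 ≤ hammingWt (Nat.pos_of_ne_zero (fun h => by simp [h] at hn)).ne' x) ∧
    (∃ x ∈ cyclicCode F n fPF, x ≠ 0 ∧
      hammingWt (Nat.pos_of_ne_zero (fun h => by simp [h] at hn)).ne' x = (q + 3) / 2) := by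
  classical
  -- numerics
  have hq2 : 2 ≤ q := hcard ▸ Fintype.one_lt_card
  have hq4' : q % 4 = 1 := by
    have h4 : q % 4 = 1 % 4 := hq4
    omega
  set m : ℕ := q / 4 with hmdef
  have hqm : q = 4 * m + 1 := by omega
  have hm1 : 1 ≤ m := by omega
  have hn4 : n = 4 * m + 2 := by omega
  have hn'2 : n' = 2 * m + 1 := by omega
  have hn0 : n ≠ 0 := NeZero.ne n
  have hM : ((n : ℤ) - 2) / 4 = (m : ℤ) := by omega
  have hP : P = (Finset.Icc (-(m : ℤ)) (m : ℤ)).image (fun i : ℤ => (i : ZMod n)) := by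
    rw [hPdef, hM]
  have castEq : ∀ s t : ℤ, ((s : ZMod n) = (t : ZMod n)) ↔ (n : ℤ) ∣ t - s := fun s t =>
    (ZMod.intCast_eq_intCast_iff s t n).trans Int.modEq_iff_dvd
  have hPmem : ∀ j : ZMod n, j ∈ P ↔ ∃ s : ℤ, -(m : ℤ) ≤ s ∧ s ≤ m ∧ (s : ZMod n) = j := by
    intro j
    rw [hP]
    simp [Finset.mem_image, Finset.mem_Icc, and_assoc]
  -- Part 1
  have hq_neg : (q : ZMod n) = -1 := by
    have h0 : ((q + 1 : ℕ) : ZMod n) = 0 := by rw [← hn]; exact ZMod.natCast_self n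
    push_cast at h0
    exact eq_neg_of_add_eq_zero_left h0
  have part1 : P.image (fun i => (q : ZMod n) * i) = P := by
    ext j
    simp only [Finset.mem_image, hq_neg, neg_one_mul]
    constructor
    · rintro ⟨i, hi, rfl⟩
      rw [hPmem] at hi ⊢
      obtain ⟨s, h1, h2, rfl⟩ := hi
      exact ⟨-s, by omega, by omega, by push_cast; ring⟩
    · intro hj
      refine ⟨-j, ?_, neg_neg j⟩
      rw [hPmem] at hj ⊢
      obtain ⟨s, h1, h2, rfl⟩ := hj
      exact ⟨-s, by omega, by omega, by push_cast; ring⟩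
  -- Part 2
  have hcardP : P.card = n' := by
    rw [hP, Finset.card_image_of_injOn, Int.card_Icc]
    · omega
    · intro s hs t ht hst
      rw [Finset.mem_coe, Finset.mem_Icc] at hs ht
      have hdvd := (castEq s t).mp hst
      have : t - s = 0 := Int.eq_zero_of_dvd_of_natAbs_lt_natAbs hdvd (by omega)
      omega
  have hcompl : ∀ j ∈ P, j + (n' : ZMod n) ∉ P := by
    intro j hj hmem
    rw [hPmem] at hj hmem
    obtain ⟨s, hs1, hs2, rfl⟩ := hj
    obtain ⟨t, ht1, ht2, ht⟩ := hmem
    have hdvd : (n : ℤ) ∣ t - (s + (n' : ℤ)) := by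
      rw [← castEq]
      push_cast
      exact ht.symm
    have : t - (s + (n' : ℤ)) = 0 :=
      Int.eq_zero_of_dvd_of_natAbs_lt_natAbs hdvd (by omega)
    omega
  have part2 : P.image (fun i => i + (n' : ZMod n)) = Pᶜ := by
    apply Finset.eq_of_subset_of_card_le
    · intro x hx
      simp only [Finset.mem_image] at hx
      obtain ⟨j, hj, rfl⟩ := hx
      simpa [Finset.mem_compl] using hcompl j hj
    · rw [Finset.card_compl, ZMod.card,
        Finset.card_image_of_injective _ (add_left_injective _), hcardP]
      omega
  -- gap lemma: the powers θ^t, m+1 ≤ t ≤ 3m+1, are non-roots of f_P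
  have hgap : ∀ t : ℕ, m + 1 ≤ t → t ≤ 3 * m + 1 → ((t : ℕ) : ZMod n) ∉ P := by
    intro t h1 h2 hmem
    rw [hPmem] at hmem
    obtain ⟨s, hs1, hs2, hst⟩ := hmem
    have hdvd : (n : ℤ) ∣ (t : ℤ) - s := by
      rw [← castEq]
      push_cast
      exact hst
    have : (t : ℤ) - s = 0 :=
      Int.eq_zero_of_dvd_of_natAbs_lt_natAbs hdvd (by omega)
    omega
  -- algebraic setup
  have hinj : Function.Injective (algebraMap F E) := (algebraMap F E).injective
  have hXmF : (X ^ n - 1 : F[X]).Monic := by simpa using monic_X_pow_sub_C (1 : F) hn0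
  have hroots_eq : (Finset.univ : Finset (ZMod n)).image (fun i => θ ^ i.val) =
      Polynomial.nthRootsFinset n (1 : E) := by
    apply Finset.eq_of_subset_of_card_le
    · intro x hx
      simp only [Finset.mem_image] at hx
      obtain ⟨i, _, rfl⟩ := hx
      rw [Polynomial.mem_nthRootsFinset (Nat.pos_of_ne_zero hn0)]
      rw [← pow_mul, mul_comm, pow_mul, hθ.pow_eq_one, one_pow]
    · rw [hθ.card_nthRootsFinset, Finset.card_image_of_injOn fun a _ b _ hab =>
        ZMod.val_injective n (hθ.pow_inj (ZMod.val_lt a) (ZMod.val_lt b) hab),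
        Finset.card_univ, ZMod.card]
  have hXn_prod : (X ^ n - 1 : E[X]) = ∏ i : ZMod n, (X - C (θ ^ i.val)) := by
    rw [X_pow_sub_one_eq_prod (Nat.pos_of_ne_zero hn0) hθ, ← hroots_eq,
      Finset.prod_image (fun a _ b _ hab =>
        ZMod.val_injective n (hθ.pow_inj (ZMod.val_lt a) (ZMod.val_lt b) hab))]
  have hPdvd : fPoly θ P ∣ (X ^ n - 1 : E[X]) := by
    rw [hXn_prod]
    exact Finset.prod_dvd_prod_of_subset P Finset.univ _ (Finset.subset_univ P)
  have hfP_monic : (fPoly θ P).Monic :=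
    monic_prod_of_monic _ _ fun i _ => monic_X_sub_C _
  have hfP_deg : (fPoly θ P).natDegree = n' := by
    rw [fPoly, natDegree_prod_of_monic _ _ fun i _ => monic_X_sub_C _]
    simp only [Polynomial.natDegree_X_sub_C]
    rw [Finset.sum_const, smul_eq_mul, mul_one, hcardP]
  have hmonicfPF : fPF.Monic := by
    rw [← Polynomial.monic_map_iff (f := algebraMap F E), hfPF]
    exact hfP_monic
  have hdegfPF : fPF.natDegree = n' := by
    rw [← natDegree_map_eq_of_injective hinj, hfPF, hfP_deg]
  have hfPFdvd : fPF ∣ (X ^ n - 1 : F[X]) := by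
    rw [← map_dvd_map (algebraMap F E) hinj hmonicfPF]
    rw [hfPF, Polynomial.map_sub, Polynomial.map_pow, map_X, Polynomial.map_one]
    exact hPdvd
  obtain ⟨gF, hgF⟩ := hfPFdvd
  have hgF0 : gF ≠ 0 := right_ne_zero_of_mul (hgF ▸ hXmF.ne_zero)
  have hfPF0 : fPF ≠ 0 := hmonicfPF.ne_zero
  have hXnat : (X ^ n - 1 : F[X]).natDegree = n := by
    simpa using Polynomial.natDegree_X_pow_sub_C (n := n) (r := (1 : F))
  have hdeggF : gF.natDegree = 2 * m + 1 := by
    have h1 := natDegree_mul hfPF0 hgF0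
    rw [← hgF, hXnat] at h1
    omega
  -- Part 3
  have part3 : Module.finrank F ↥(cyclicCode F n fPF) = (q + 1) / 2 := by
    rw [code_finrank hn0 fPF gF hmonicfPF (by rw [mul_comm]; exact hgF.symm) hdegfPF]
    omega
  -- Part 4 (minimum distance lower bound)
  have part4 : ∀ x ∈ cyclicCode F n fPF, x ≠ 0 →
      (q + 3) / 2 ≤ hammingWt (Nat.pos_of_ne_zero (fun h => by simp [h] at hn)).ne' x := by
    intro x hx hx0
    obtain ⟨c₀, hc₀⟩ := AdjoinRoot.mk_surjective x
    set c : F[X] := c₀ %ₘ (X ^ n - 1) with hc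
    have hmkc : AdjoinRoot.mk (X ^ n - 1 : F[X]) c = x := by
      rw [hc, modByMonic_eq_sub_mul_div _ (X ^ n - 1), map_sub, map_mul, AdjoinRoot.mk_self,
        zero_mul, sub_zero, hc₀]
    have hwt_eq : hammingWt (Nat.pos_of_ne_zero (fun h => by simp [h] at hn)).ne' x
        = c.support.card := by
      unfold hammingWt
      rw [← hc₀, AdjoinRoot.modByMonicHom_mk]
    have hc0 : c ≠ 0 := fun h => hx0 (by rw [← hmkc, h, map_zero])
    have hcdeg : c.natDegree < n := by
      rw [Polynomial.natDegree_lt_iff_degree_lt hc0]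
      calc c.degree < (X ^ n - 1 : F[X]).degree := degree_modByMonic_lt c₀ hXmF
        _ = (n : WithBot ℕ) := by
            simpa using Polynomial.degree_X_pow_sub_C (Nat.pos_of_ne_zero hn0) (1 : F)
    have hdvd : (X ^ n - 1 : F[X]) ∣ c * fPF := by
      rw [← AdjoinRoot.mk_eq_zero, map_mul, hmkc]
      simpa [cyclicCode, LinearMap.mem_ker, LinearMap.mulRight_apply] using hx
    have hdvdE : (X ^ n - 1 : E[X]) ∣ (c.map (algebraMap F E)) * fPoly θ P := by
      have h2 := Polynomial.map_dvd (algebraMap F E) hdvd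
      rw [Polynomial.map_mul, hfPF, Polynomial.map_sub, Polynomial.map_pow, map_X,
        Polynomial.map_one] at h2
      exact h2
    obtain ⟨k, hk⟩ := hdvdE
    have hroots : ∀ t : ℕ, m + 1 ≤ t → t ≤ m + (2 * m + 1) →
        (c.map (algebraMap F E)).eval (θ ^ t) = 0 := by
      intro t h1 h2
      have hfP_ne : (fPoly θ P).eval (θ ^ t) ≠ 0 := by
        rw [fPoly, Polynomial.eval_prod]
        refine Finset.prod_ne_zero_iff.mpr fun j hj => ?_
        simp only [eval_sub, eval_X, eval_C]
        intro hEq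
        have hteq : θ ^ t = θ ^ j.val := sub_eq_zero.mp hEq
        have htj : t = j.val := hθ.pow_inj (by omega) (ZMod.val_lt j) hteq
        refine hgap t h1 (by omega) ?_
        rw [htj]
        simpa using hj
      have h0 : ((c.map (algebraMap F E)) * fPoly θ P).eval (θ ^ t) = 0 := by
        rw [hk, eval_mul, eval_sub, eval_pow, eval_X, eval_one, ← pow_mul, mul_comm t n,
          pow_mul, hθ.pow_eq_one, one_pow, sub_self, zero_mul]
      rw [eval_mul] at h0
      exact (mul_eq_zero.mp h0).resolve_right hfP_ne
    have hbch := bch_bound hθ (Polynomial.map_ne_zero hc0)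
      (by rw [natDegree_map_eq_of_injective hinj]; exact hcdeg) m (2 * m + 1) hroots
    rw [Polynomial.support_map_of_injective _ hinj] at hbch
    rw [hwt_eq]
    omega
  refine ⟨part1, part2, part3, part4, ?_⟩
  -- Part 5: codeword of minimal weight
  have hmemgF : AdjoinRoot.mk (X ^ n - 1 : F[X]) gF ∈ cyclicCode F n fPF := by
    rw [mem_cyclicCode]
    exact ⟨1, by rw [hgF]; ring⟩
  have hdeglt : gF.degree < (X ^ n - 1 : F[X]).degree := by
    calc gF.degree = (gF.natDegree : WithBot ℕ) := degree_eq_natDegree hgF0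
      _ < (n : WithBot ℕ) := by exact_mod_cast (by omega : gF.natDegree < n)
      _ = (X ^ n - 1 : F[X]).degree := by
          simpa using (Polynomial.degree_X_pow_sub_C (Nat.pos_of_ne_zero hn0) (1 : F)).symm
  have hnegF : AdjoinRoot.mk (X ^ n - 1 : F[X]) gF ≠ 0 := by
    rw [Ne, AdjoinRoot.mk_eq_zero]
    intro hdvd
    exact hgF0 (eq_zero_of_dvd_of_degree_lt hdvd hdeglt)
  have hwt : hammingWt (Nat.pos_of_ne_zero (fun h => by simp [h] at hn)).ne'
      (AdjoinRoot.mk (X ^ n - 1 : F[X]) gF) = gF.support.card := by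
    unfold hammingWt
    rw [AdjoinRoot.modByMonicHom_mk, (modByMonic_eq_self_iff hXmF).mpr hdeglt]
  refine ⟨AdjoinRoot.mk (X ^ n - 1 : F[X]) gF, hmemgF, hnegF, ?_⟩
  have hge := part4 _ hmemgF hnegF
  have hle := Polynomial.card_supp_le_succ_natDegree gF
  rw [hwt] at hge ⊢
  omega
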